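/- (Condition (A1) for independent bounded zero-mean noise and biclustering projections, Section on the biclustering model.) Let ξ = (ξ_{ij})_{(i,j) ∈ [n₁]×[n₂]} be independent random variables with E ξ_{ij} = 0 and |ξ_{ij}| ≤ 1 almost surely. Let a row partition (I₁ᵃ)_{a∈[k₁]} of [n₁] and a column partition (I₂ᵇ)_{b∈[k₂]} of [n₂] be given, determining the partition of [n₁]×[n₂] into the k₁k₂ blocks I₁ᵃ × I₂ᵇ; let L_I ⊆ ℝ^{n₁n₂} be the subspace of arrays that are constant on each block, and P_I the orthogonal projection onto L_I. Then, with b₀ = (e−1)/(2(e+1)), E exp( b₀ ‖P_I ξ‖² ) ≤ e^{k₁k₂}. -/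

import Mathlib

open MeasureTheory Real ProbabilityTheory

/-- The orthogonal projection onto a linear subspace, as a map `E → E`. -/
noncomputable def proj {N : Type*} [Fintype N] (K : Submodule ℝ (EuclideanSpace ℝ N)) :
    EuclideanSpace ℝ N →L[ℝ] EuclideanSpace ℝ N :=
  K.subtypeL.comp (K.orthogonalProjectionOnto)

/-- The subspace of `n₁ × n₂` arrays that are constant on each block of the biclustering
partition determined by the cluster assignments `z₁ : [n₁] → [k₁]` and `z₂ : [n₂] → [k₂]`. -/
def blockSubspace {n₁ n₂ k₁ k₂ : ℕ} (z₁ : Fin n₁ → Fin k₁) (z₂ : Fin n₂ → Fin k₂) :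
    Submodule ℝ (EuclideanSpace ℝ (Fin n₁ × Fin n₂)) where
  carrier := {x | ∀ p q : Fin n₁ × Fin n₂, z₁ p.1 = z₁ q.1 → z₂ p.2 = z₂ q.2 → x p = x q}
  add_mem' := by
    intro a b ha hb p q h1 h2
    show a p + b p = a q + b q
    rw [ha p q h1 h2, hb p q h1 h2]
  zero_mem' := by intro p q _ _; rfl
  smul_mem' := by
    intro c a ha p q h1 h2
    show c • a p = c • a q
    rw [ha p q h1 h2]

set_option maxHeartbeats 1000000
open scoped RealInnerProductSpace

lemma my_exp_le_cosh {x t : ℝ} (hx : |x| ≤ 1) : exp (t * x) ≤ cosh t + x * sinh t := by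
  have h1 : -1 ≤ x := neg_le_of_abs_le hx
  have h2 : x ≤ 1 := le_of_abs_le hx
  have := convexOn_exp.2 (Set.mem_univ t) (Set.mem_univ (-t))
    (show (0:ℝ) ≤ (1 + x) / 2 by linarith) (show (0:ℝ) ≤ (1 - x) / 2 by linarith)
    (show (1 + x) / 2 + (1 - x) / 2 = 1 by ring)
  simp only [smul_eq_mul] at this
  calc exp (t * x) = exp ((1+x)/2 * t + (1-x)/2 * (-t)) := by ring_nf
    _ ≤ (1+x)/2 * exp t + (1-x)/2 * exp (-t) := this
    _ = cosh t + x * sinh t := by rw [Real.cosh_eq, Real.sinh_eq]; ring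

lemma my_mgf_single {Ω : Type*} [MeasurableSpace Ω] (μ : Measure Ω) [IsProbabilityMeasure μ]
    {X : Ω → ℝ} (hm : Measurable X) (h0 : ∫ ω, X ω ∂μ = 0) (hb : ∀ᵐ ω ∂μ, |X ω| ≤ 1) (t : ℝ) :
    mgf X μ t ≤ exp (t ^ 2 / 2) := by
  have hXint : Integrable X μ := by
    refine Integrable.mono' (integrable_const 1) hm.aestronglyMeasurable ?_
    filter_upwards [hb] with ω h using by simpa using h
  have hint1 : Integrable (fun ω => exp (t * X ω)) μ := by
    refine Integrable.mono' (integrable_const (exp |t|)) ((hm.const_mul t).exp).aestronglyMeasurable ?_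
    filter_upwards [hb] with ω h
    rw [Real.norm_eq_abs, abs_exp, Real.exp_le_exp]
    calc t * X ω ≤ |t * X ω| := le_abs_self _
      _ = |t| * |X ω| := abs_mul _ _
      _ ≤ |t| * 1 := by gcongr
      _ = |t| := mul_one _
  have hint2 : Integrable (fun ω => cosh t + X ω * sinh t) μ :=
    (integrable_const _).add (hXint.mul_const _)
  have : mgf X μ t ≤ ∫ ω, (cosh t + X ω * sinh t) ∂μ := by
    refine integral_mono_ae hint1 hint2 ?_
    filter_upwards [hb] with ω h using my_exp_le_cosh h
  calc mgf X μ t ≤ ∫ ω, (cosh t + X ω * sinh t) ∂μ := this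
    _ = cosh t := by
        rw [integral_add (integrable_const _) (hXint.mul_const _), integral_const,
          integral_mul_const, h0]
        simp
    _ ≤ exp (t ^ 2 / 2) := Real.cosh_le_exp_half_sq t

lemma my_block_bound {Ω : Type*} [MeasurableSpace Ω] (μ : Measure Ω) [IsProbabilityMeasure μ]
    {S : Ω → ℝ} {N : ℕ} (hm : Measurable S) (hb : ∀ᵐ ω ∂μ, |S ω| ≤ N)
    (hmgf : ∀ t : ℝ, mgf S μ t ≤ exp (t ^ 2 * N / 2)) :
    ∫ ω, exp ((exp 1 - 1) / (2 * (exp 1 + 1)) * (S ω ^ 2 / N)) ∂μ ≤ exp 1 := by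
  rcases Nat.eq_zero_or_pos N with hN | hN
  · subst hN
    simp only [Nat.cast_zero, div_zero, mul_zero, exp_zero, integral_const, measure_univ,
      ENNReal.toReal_one, probReal_univ, smul_eq_mul, mul_one, one_smul]
    exact Real.one_le_exp (by norm_num)
  have hNR : (0:ℝ) < N := by exact_mod_cast hN
  set c : ℝ := (exp 1 - 1) / (2 * (exp 1 + 1)) with hc_def
  have he1 : (1:ℝ) < exp 1 := by
    have := Real.add_one_lt_exp (x := 1) (by norm_num); linarith
  have hE : (0:ℝ) < 2 * (exp 1 + 1) := by linarith
  have h1 : c * (2 * (exp 1 + 1)) = exp 1 - 1 := div_mul_cancel₀ _ (ne_of_gt hE)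
  have hc0 : 0 < c := div_pos (by linarith) hE
  have hb0 : (0:ℝ) < 1/2 - c := by nlinarith
  have h2 : (1/2 - c) * (exp 1 + 1) = 1 := by nlinarith
  have hinv : (1/2 - c)⁻¹ = exp 1 + 1 := inv_eq_of_mul_eq_one_right h2
  -- integrability of exp(t * S) for every t
  have hint : ∀ t : ℝ, Integrable (fun ω => exp (t * S ω)) μ := by
    intro t
    refine Integrable.mono' (integrable_const (exp (|t| * N)))
      ((hm.const_mul t).exp).aestronglyMeasurable ?_
    filter_upwards [hb] with ω h
    rw [Real.norm_eq_abs, abs_exp, Real.exp_le_exp]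
    calc t * S ω ≤ |t * S ω| := le_abs_self _
      _ = |t| * |S ω| := abs_mul _ _
      _ ≤ |t| * N := by gcongr
  -- tail bound
  have tail : ∀ t : ℝ, 0 < t → μ {ω | t ≤ S ω ^ 2 / N} ≤ ENNReal.ofReal (2 * exp (-t/2)) := by
    intro t ht
    set u : ℝ := Real.sqrt (t * N) with hu_def
    have htN : 0 < t * N := mul_pos ht hNR
    have hu0 : 0 < u := Real.sqrt_pos.mpr htN
    have hu2 : u ^ 2 = t * N := Real.sq_sqrt htN.le
    have hsub : {ω | t ≤ S ω ^ 2 / N} ⊆ {ω | u ≤ S ω} ∪ {ω | S ω ≤ -u} := by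
      intro ω hω
      simp only [Set.mem_setOf_eq] at hω
      have h2 : u ^ 2 ≤ S ω ^ 2 := by
        rw [hu2]; rw [le_div_iff₀ hNR] at hω; nlinarith
      have habs : u ≤ |S ω| := by
        have h3 := Real.sqrt_le_sqrt h2
        rwa [Real.sqrt_sq hu0.le, Real.sqrt_sq_eq_abs] at h3
      rcases le_or_gt 0 (S ω) with h | h
      · left; simp only [Set.mem_setOf_eq]; rwa [abs_of_nonneg h] at habs
      · right; simp only [Set.mem_setOf_eq]; rw [abs_of_neg h] at habs; linarith
    have hupper : (μ {ω | u ≤ S ω}).toReal ≤ exp (-t/2) := by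
      have h1 := measure_ge_le_exp_mul_mgf (μ := μ) (X := S) u
        (t := u / N) (by positivity) (hint _)
      have h2 : exp (-(u/N) * u) * mgf S μ (u/N) ≤ exp (-(u/N) * u) * exp ((u/N)^2 * N / 2) := by
        gcongr; exact hmgf _
      have h3 : exp (-(u/N) * u) * exp ((u/N)^2 * N / 2) = exp (-t/2) := by
        rw [← Real.exp_add]
        congr 1
        have : -(u/N) * u + (u/N)^2 * N / 2 = -(u^2) / (2*N) := by field_simp; ring
        rw [this, hu2]
        field_simp
      rw [measureReal_def] at h1
      linarith
    have hlower : (μ {ω | S ω ≤ -u}).toReal ≤ exp (-t/2) := by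
      have h1 := measure_le_le_exp_mul_mgf (μ := μ) (X := S) (-u)
        (t := -(u / N)) (neg_nonpos.mpr (by positivity)) (hint _)
      have h2 : exp (-(-(u/N)) * (-u)) * mgf S μ (-(u/N)) ≤
          exp (-(-(u/N)) * (-u)) * exp ((-(u/N))^2 * N / 2) := by
        gcongr; exact hmgf _
      have h3 : exp (-(-(u/N)) * (-u)) * exp ((-(u/N))^2 * N / 2) = exp (-t/2) := by
        rw [← Real.exp_add]
        congr 1
        have : -(-(u/N)) * (-u) + (-(u/N))^2 * N / 2 = -(u^2) / (2*N) := by field_simp; ring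
        rw [this, hu2]
        field_simp
      rw [measureReal_def] at h1
      linarith
    calc μ {ω | t ≤ S ω ^ 2 / N} ≤ μ ({ω | u ≤ S ω} ∪ {ω | S ω ≤ -u}) := measure_mono hsub
      _ ≤ μ {ω | u ≤ S ω} + μ {ω | S ω ≤ -u} := measure_union_le _ _
      _ ≤ ENNReal.ofReal (exp (-t/2)) + ENNReal.ofReal (exp (-t/2)) := by
          gcongr
          · exact ENNReal.le_ofReal_iff_toReal_le (measure_ne_top _ _) (exp_pos _).le |>.mpr hupper
          · exact ENNReal.le_ofReal_iff_toReal_le (measure_ne_top _ _) (exp_pos _).le |>.mpr hlower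
      _ = ENNReal.ofReal (2 * exp (-t/2)) := by
          rw [← ENNReal.ofReal_add (exp_pos _).le (exp_pos _).le]; ring_nf

  -- the function f = S²/N
  set f : Ω → ℝ := fun ω => S ω ^ 2 / N with hf_def
  have hf_meas : Measurable f := (hm.pow_const 2).div_const _
  have hf_nn : ∀ ω, 0 ≤ f ω := fun ω => by positivity
  have hfb : ∀ᵐ ω ∂μ, f ω ≤ N := by
    filter_upwards [hb] with ω h
    rw [hf_def]
    simp only [div_le_iff₀ hNR]
    nlinarith [sq_abs (S ω), abs_nonneg (S ω), mul_self_le_mul_self (abs_nonneg (S ω)) h]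
  have hg_int : Integrable (fun ω => exp (c * f ω)) μ := by
    refine Integrable.mono' (integrable_const (exp (c * N)))
      ((hf_meas.const_mul c).exp).aestronglyMeasurable ?_
    filter_upwards [hfb] with ω h
    rw [Real.norm_eq_abs, abs_exp, Real.exp_le_exp]
    exact mul_le_mul_of_nonneg_left h hc0.le
  -- key interval integral
  have key : ∀ y : ℝ, (∫ s in (0:ℝ)..y, c * exp (c * s)) = exp (c * y) - 1 := by
    intro y
    have hderiv : ∀ s ∈ Set.uIcc (0:ℝ) y,
        HasDerivAt (fun u => exp (c * u)) (c * exp (c * s)) s := by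
      intro s _
      have h : HasDerivAt (fun u : ℝ => c * u) c s := by
        simpa using (hasDerivAt_id s).const_mul c
      simpa [mul_comm] using h.exp
    have h2' := intervalIntegral.integral_eq_sub_of_hasDerivAt hderiv
      ((continuous_const.mul
        (continuous_exp.comp (continuous_const.mul continuous_id))).intervalIntegrable 0 y)
    simpa using h2'
  have lhs_eq : ∫⁻ ω, ENNReal.ofReal (exp (c * f ω)) ∂μ
      = 1 + ∫⁻ t in Set.Ioi (0:ℝ), μ {a | t ≤ f a} * ENNReal.ofReal (c * exp (c * t)) := by
    have hpt : ∀ ω, ENNReal.ofReal (exp (c * f ω))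
        = ENNReal.ofReal (∫ s in (0:ℝ)..f ω, c * exp (c * s)) + 1 := by
      intro ω
      rw [key]
      rw [← ENNReal.ofReal_one,
        ← ENNReal.ofReal_add (by nlinarith [Real.one_le_exp (mul_nonneg hc0.le (hf_nn ω))]) (by norm_num)]
      congr 1; ring
    simp_rw [hpt]
    rw [lintegral_add_right _ measurable_const, lintegral_one, measure_univ,
      MeasureTheory.lintegral_comp_eq_lintegral_meas_le_mul (g := fun s => c * exp (c * s)) μ
        (Filter.Eventually.of_forall hf_nn) hf_meas.aemeasurable
        (fun t _ => (by fun_prop : Continuous fun s => c * exp (c * s)).intervalIntegrable 0 t)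
        (Filter.Eventually.of_forall fun t => by positivity)]
    rw [add_comm]
  have rhs_le : ∫⁻ t in Set.Ioi (0:ℝ), μ {a | t ≤ f a} * ENNReal.ofReal (c * exp (c * t))
      ≤ ENNReal.ofReal (exp 1 - 1) := by
    have step1 : ∫⁻ t in Set.Ioi (0:ℝ), μ {a | t ≤ f a} * ENNReal.ofReal (c * exp (c * t))
        ≤ ∫⁻ t in Set.Ioi (0:ℝ), ENNReal.ofReal ((2*c) * exp (-(1/2 - c) * t)) := by
      apply setLIntegral_mono
        (Measurable.ennreal_ofReal (by fun_prop : Measurable fun t : ℝ => 2 * c * rexp (-(1 / 2 - c) * t)))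
      intro t ht
      calc μ {a | t ≤ f a} * ENNReal.ofReal (c * exp (c * t))
          ≤ ENNReal.ofReal (2 * exp (-t/2)) * ENNReal.ofReal (c * exp (c * t)) :=
            mul_le_mul_left (tail t ht) _
        _ = ENNReal.ofReal (2 * exp (-t/2) * (c * exp (c * t))) :=
            (ENNReal.ofReal_mul (by positivity)).symm
        _ = ENNReal.ofReal ((2*c) * exp (-(1/2 - c) * t)) := by
            congr 1
            have hh : 2 * exp (-t/2) * (c * exp (c * t)) = 2*c*(exp (-t/2) * exp (c * t)) := by
              ring
            rw [hh, ← Real.exp_add]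
            congr 1
            ring
    have int_exp : IntegrableOn (fun t => (2*c) * exp (-(1/2 - c) * t)) (Set.Ioi (0:ℝ)) :=
      (exp_neg_integrableOn_Ioi 0 hb0).const_mul (2*c)
    have step2 : ∫⁻ t in Set.Ioi (0:ℝ), ENNReal.ofReal ((2*c) * exp (-(1/2 - c) * t))
        = ENNReal.ofReal (∫ t in Set.Ioi (0:ℝ), (2*c) * exp (-(1/2 - c) * t)) :=
      (ofReal_integral_eq_lintegral_ofReal int_exp
        (Filter.Eventually.of_forall fun t => by positivity)).symm
    have val : (∫ t in Set.Ioi (0:ℝ), (2*c) * exp (-(1/2 - c) * t)) = exp 1 - 1 := by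
      rw [MeasureTheory.integral_const_mul]
      have hI : (∫ t in Set.Ioi (0:ℝ), exp (-(1/2 - c) * t)) = (1/2 - c)⁻¹ := by
        have h := integral_comp_mul_left_Ioi (fun u => exp (-u)) 0 hb0
        simp only [mul_zero] at h
        simp only [neg_mul]
        rw [h, integral_exp_neg_Ioi]
        simp
      rw [hI, hinv]
      linear_combination h1
    rw [step2, val] at step1
    exact step1
  have hL : ENNReal.ofReal (∫ ω, exp (c * f ω) ∂μ) ≤ ENNReal.ofReal (exp 1) := by
    rw [ofReal_integral_eq_lintegral_ofReal hg_int
      (Filter.Eventually.of_forall fun ω => (exp_pos _).le), lhs_eq]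
    calc 1 + ∫⁻ t in Set.Ioi (0:ℝ), μ {a | t ≤ f a} * ENNReal.ofReal (c * exp (c * t))
        ≤ 1 + ENNReal.ofReal (exp 1 - 1) := add_le_add_right rhs_le _
      _ = ENNReal.ofReal (exp 1) := by
          rw [← ENNReal.ofReal_one, ← ENNReal.ofReal_add (by norm_num) (by linarith)]
          norm_num
  exact (ENNReal.ofReal_le_ofReal_iff (exp_pos 1).le).mp hL

lemma my_indep_prod {Ω ι κ : Type*} [MeasurableSpace Ω] {μ : Measure Ω} [IsProbabilityMeasure μ]
    {ξf : ι → Ω → ℝ}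
    (hindep : iIndepFun (m := fun _ : ι => inferInstanceAs (MeasurableSpace ℝ)) ξf μ)
    (hmeas : ∀ i, Measurable (ξf i))
    (B : κ → Finset ι) (hdisj : ∀ j j', j ≠ j' → Disjoint (B j) (B j'))
    (φ : κ → ℝ → ℝ) (hφ : ∀ j, Measurable (φ j))
    (hbd : ∀ j, ∃ C, ∀ᵐ ω ∂μ, |φ j (∑ i ∈ B j, ξf i ω)| ≤ C)
    (s : Finset κ) :
    ∫ ω, ∏ j ∈ s, φ j (∑ i ∈ B j, ξf i ω) ∂μ
      = ∏ j ∈ s, ∫ ω, φ j (∑ i ∈ B j, ξf i ω) ∂μ := by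
  classical
  set g : κ → Ω → ℝ := fun j ω => φ j (∑ i ∈ B j, ξf i ω) with hg_def
  have hgmeas : ∀ j, Measurable (g j) := fun j =>
    (hφ j).comp (Finset.measurable_sum _ (fun i _ => hmeas i))
  have hbd' : ∀ j, ∃ C, 0 ≤ C ∧ ∀ᵐ ω ∂μ, |g j ω| ≤ C := by
    intro j
    obtain ⟨C, hC⟩ := hbd j
    exact ⟨max C 0, le_max_right _ _, hC.mono fun ω h => h.trans (le_max_left _ _)⟩
  choose C hC0 hCae using hbd'
  have hint : ∀ t : Finset κ, Integrable (fun ω => ∏ j ∈ t, g j ω) μ := by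
    intro t
    refine Integrable.mono' (integrable_const (∏ j ∈ t, C j))
      (Finset.measurable_prod _ (fun j _ => hgmeas j)).aestronglyMeasurable ?_
    filter_upwards [(ae_ball_iff t.countable_toSet).2 (fun j _ => hCae j)] with ω h
    rw [Real.norm_eq_abs, Finset.abs_prod]
    exact Finset.prod_le_prod (fun j _ => abs_nonneg _) (fun j hj => h j hj)
  induction s using Finset.induction_on with
  | empty => simp
  | @insert j s hj ih =>
    have hT : Disjoint (B j) (s.biUnion B) := by
      rw [Finset.disjoint_biUnion_right]
      exact fun j' hj' => hdisj j j' (fun h => hj (h ▸ hj'))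
    have base := hindep.indepFun_finset (B j) (s.biUnion B) hT hmeas
    set T := s.biUnion B with hT_def
    have hsum_eq : ∀ (j' : κ), j' ∈ s → ∀ ω,
        (∑ i ∈ Finset.univ.filter (fun i : ↥T => (i : ι) ∈ B j'), ξf (i : ι) ω)
          = ∑ i ∈ B j', ξf i ω := by
      intro j' hj' ω
      rw [Finset.sum_filter]
      rw [Finset.sum_coe_sort T (fun i => if i ∈ B j' then ξf i ω else 0)]
      rw [← Finset.sum_filter]
      congr 1
      ext i
      simp only [Finset.mem_filter]
      exact ⟨fun h => h.2, fun h => ⟨Finset.mem_biUnion.2 ⟨j', hj', h⟩, h⟩⟩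
    have hpair : IndepFun (g j) (fun ω => ∏ j' ∈ s, g j' ω) μ := by
      have hΦ1 : Measurable (fun v : (↥(B j) → ℝ) => φ j (∑ i : ↥(B j), v i)) :=
        (hφ j).comp (Finset.measurable_sum _ (fun i _ => measurable_pi_apply i))
      have hΦ2 : Measurable (fun v : (↥T → ℝ) =>
          ∏ j' ∈ s, φ j' (∑ i ∈ Finset.univ.filter (fun i : ↥T => (i : ι) ∈ B j'), v i)) :=
        Finset.measurable_prod _ (fun j' _ =>
          (hφ j').comp (Finset.measurable_sum _ (fun i _ => measurable_pi_apply i)))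
      have hcomp := base.comp hΦ1 hΦ2
      have e1 : ((fun v : (↥(B j) → ℝ) => φ j (∑ i : ↥(B j), v i)) ∘
          (fun ω (i : ↥(B j)) => ξf (i : ι) ω)) = g j := by
        funext ω
        simp only [Function.comp_apply, hg_def]
        congr 1
        exact Finset.sum_coe_sort (B j) (fun i => ξf i ω)
      have e2 : ((fun v : (↥T → ℝ) =>
          ∏ j' ∈ s, φ j' (∑ i ∈ Finset.univ.filter (fun i : ↥T => (i : ι) ∈ B j'), v i)) ∘
          (fun ω (i : ↥T) => ξf (i : ι) ω)) = fun ω => ∏ j' ∈ s, g j' ω := by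
        funext ω
        simp only [Function.comp_apply, hg_def]
        exact Finset.prod_congr rfl (fun j' hj' => by rw [hsum_eq j' hj' ω])
      rw [← e1, ← e2]
      exact hcomp
    have step : ∫ ω, g j ω * (∏ j' ∈ s, g j' ω) ∂μ
        = (∫ ω, g j ω ∂μ) * ∫ ω, ∏ j' ∈ s, g j' ω ∂μ := by
      have h1 : Integrable (g j) μ := by
        have := hint {j}
        simpa using this
      exact hpair.integral_fun_mul_eq_mul_integral h1.aestronglyMeasurable (hint s).aestronglyMeasurable
    rw [Finset.prod_insert hj, ← ih]
    simp_rw [Finset.prod_insert hj]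
    exact step

lemma my_proj_norm {n₁ n₂ k₁ k₂ : ℕ} (z₁ : Fin n₁ → Fin k₁) (z₂ : Fin n₂ → Fin k₂)
    (x : EuclideanSpace ℝ (Fin n₁ × Fin n₂)) :
    ‖proj (blockSubspace z₁ z₂) x‖ ^ 2
      = ∑ ab : Fin k₁ × Fin k₂,
          (∑ p ∈ Finset.univ.filter (fun p : Fin n₁ × Fin n₂ => (z₁ p.1, z₂ p.2) = ab), x p) ^ 2
            / (Finset.univ.filter (fun p : Fin n₁ × Fin n₂ => (z₁ p.1, z₂ p.2) = ab)).card := by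
  classical
  set K := blockSubspace z₁ z₂ with hK_def
  set Bl : Fin k₁ × Fin k₂ → Finset (Fin n₁ × Fin n₂) :=
    fun ab => Finset.univ.filter (fun p => (z₁ p.1, z₂ p.2) = ab) with hBl_def
  set y : EuclideanSpace ℝ (Fin n₁ × Fin n₂) :=
    WithLp.toLp 2 (fun p : Fin n₁ × Fin n₂ => (∑ q ∈ Bl (z₁ p.1, z₂ p.2), x q) / (Bl (z₁ p.1, z₂ p.2)).card) with hy_def
  have hmem : y ∈ K := by
    intro p q h1 h2
    simp only [hy_def, PiLp.toLp_apply]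
    rw [h1, h2]
  have hy_val : ∀ ab, ∀ p ∈ Bl ab, y p = (∑ q ∈ Bl ab, x q) / (Bl ab).card := by
    intro ab p hp
    simp only [hBl_def, Finset.mem_filter] at hp
    simp only [hy_def, PiLp.toLp_apply, hp.2]
  have horth : ∀ w ∈ K, (inner ℝ (x - y) w : ℝ) = 0 := by
    intro w hw
    have hinner : (inner ℝ (x - y) w : ℝ) = ∑ p : Fin n₁ × Fin n₂, (x p - y p) * w p := by
      simp only [PiLp.inner_apply, RCLike.inner_apply, conj_trivial]
      exact Finset.sum_congr rfl (fun p _ => by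
        simp [PiLp.sub_apply, mul_comm])
    rw [hinner]
    rw [← Finset.sum_fiberwise_of_maps_to (g := fun p : Fin n₁ × Fin n₂ => (z₁ p.1, z₂ p.2))
      (fun p _ => Finset.mem_univ _) (fun p => (x p - y p) * w p)]
    refine Finset.sum_eq_zero (fun ab _ => ?_)
    have hfil : Finset.univ.filter (fun p : Fin n₁ × Fin n₂ => (z₁ p.1, z₂ p.2) = ab) = Bl ab := rfl
    rw [hfil]
    rcases Finset.eq_empty_or_nonempty (Bl ab) with he | ⟨p₀, hp₀⟩
    · rw [he]; simp
    have hcard : (0:ℝ) < (Bl ab).card := by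
      have := Finset.card_pos.mpr ⟨p₀, hp₀⟩
      exact_mod_cast this
    have hw_const : ∀ p ∈ Bl ab, w p = w p₀ := by
      intro p hp
      simp only [hBl_def, Finset.mem_filter] at hp hp₀
      have h1 : z₁ p.1 = z₁ p₀.1 := by
        have := hp.2.trans hp₀.2.symm
        exact (Prod.mk.injEq _ _ _ _).mp this |>.1
      have h2 : z₂ p.2 = z₂ p₀.2 := by
        have := hp.2.trans hp₀.2.symm
        exact (Prod.mk.injEq _ _ _ _).mp this |>.2
      exact hw p p₀ h1 h2
    calc ∑ p ∈ Bl ab, (x p - y p) * w p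
        = ∑ p ∈ Bl ab, (x p - (∑ q ∈ Bl ab, x q) / (Bl ab).card) * w p₀ := by
          refine Finset.sum_congr rfl (fun p hp => ?_)
          rw [hy_val ab p hp, hw_const p hp]
      _ = (∑ p ∈ Bl ab, (x p - (∑ q ∈ Bl ab, x q) / (Bl ab).card)) * w p₀ := by
          rw [Finset.sum_mul]
      _ = 0 := by
          rw [Finset.sum_sub_distrib, Finset.sum_const, nsmul_eq_mul,
            mul_div_cancel₀ _ (ne_of_gt hcard)]
          simp
  have hproj : (proj K x : EuclideanSpace ℝ (Fin n₁ × Fin n₂)) = y := by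
    have := Submodule.eq_starProjection_of_mem_of_inner_eq_zero (K := K) hmem horth
    exact this
  rw [hproj]
  have hnorm : ‖y‖ ^ 2 = ∑ p : Fin n₁ × Fin n₂, y p ^ 2 := by
    rw [EuclideanSpace.norm_eq, Real.sq_sqrt (Finset.sum_nonneg fun p _ => sq_nonneg _)]
    exact Finset.sum_congr rfl (fun p _ => by rw [Real.norm_eq_abs, sq_abs])
  rw [hnorm]
  rw [← Finset.sum_fiberwise_of_maps_to (g := fun p : Fin n₁ × Fin n₂ => (z₁ p.1, z₂ p.2))
    (fun p _ => Finset.mem_univ _) (fun p => y p ^ 2)]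
  refine Finset.sum_congr rfl (fun ab _ => ?_)
  have hfil : Finset.univ.filter (fun p : Fin n₁ × Fin n₂ => (z₁ p.1, z₂ p.2) = ab) = Bl ab := rfl
  rw [hfil]
  rcases Finset.eq_empty_or_nonempty (Bl ab) with he | ⟨p₀, hp₀⟩
  · rw [he]; simp
  have hcard : (0:ℝ) < (Bl ab).card := by
    have := Finset.card_pos.mpr ⟨p₀, hp₀⟩
    exact_mod_cast this
  calc ∑ p ∈ Bl ab, y p ^ 2
      = ∑ p ∈ Bl ab, ((∑ q ∈ Bl ab, x q) / (Bl ab).card) ^ 2 := by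
        refine Finset.sum_congr rfl (fun p hp => by rw [hy_val ab p hp])
    _ = (Bl ab).card • (((∑ q ∈ Bl ab, x q) / (Bl ab).card) ^ 2) := by
        rw [Finset.sum_const]
    _ = (∑ q ∈ Bl ab, x q) ^ 2 / (Bl ab).card := by
        rw [nsmul_eq_mul, div_pow]
        field_simp
/-- **Condition (A1) for independent bounded zero-mean noise and biclustering projections**
(Section on the biclustering model): if the `ξ_{ij}` are independent, mean zero and bounded by
`1`, and `P_I` is the projection onto the block-constant subspace of a `k₁ × k₂` biclustering
partition, then `E exp(b₀‖P_I ξ‖²) ≤ e^{k₁k₂}` with `b₀ = (e−1)/(2(e+1))`. -/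
theorem biclustering_bounded_noise_A1
    {n₁ n₂ k₁ k₂ : ℕ} {Ω : Type*} [MeasurableSpace Ω]
    (μ : Measure Ω) [IsProbabilityMeasure μ]
    (ξ : Ω → EuclideanSpace ℝ (Fin n₁ × Fin n₂))
    (hmeas : ∀ p : Fin n₁ × Fin n₂, Measurable fun ω => ξ ω p)
    (hindep : iIndepFun (m := fun _ : Fin n₁ × Fin n₂ => inferInstanceAs (MeasurableSpace ℝ))
      (fun p ω => ξ ω p) μ)
    (hmean : ∀ p : Fin n₁ × Fin n₂, ∫ ω, ξ ω p ∂μ = 0)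
    (hbdd : ∀ p : Fin n₁ × Fin n₂, ∀ᵐ ω ∂μ, |ξ ω p| ≤ 1)
    (z₁ : Fin n₁ → Fin k₁) (z₂ : Fin n₂ → Fin k₂) :
    ∫⁻ ω, ENNReal.ofReal
        (exp ((exp 1 - 1) / (2 * (exp 1 + 1)) * ‖proj (blockSubspace z₁ z₂) (ξ ω)‖ ^ 2)) ∂μ
      ≤ ENNReal.ofReal (exp (k₁ * k₂)) := by
    classical
  set c : ℝ := (exp 1 - 1) / (2 * (exp 1 + 1)) with hc_def
  have he1 : (1:ℝ) < exp 1 := by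
    have := Real.add_one_lt_exp (x := 1) (by norm_num); linarith
  have hc0 : 0 < c := div_pos (by linarith) (by linarith)
  set Bl : Fin k₁ × Fin k₂ → Finset (Fin n₁ × Fin n₂) :=
    fun ab => Finset.univ.filter (fun p => (z₁ p.1, z₂ p.2) = ab) with hBl_def
  set S : Fin k₁ × Fin k₂ → Ω → ℝ := fun ab ω => ∑ p ∈ Bl ab, ξ ω p with hS_def
  set Nc : Fin k₁ × Fin k₂ → ℕ := fun ab => (Bl ab).card with hN_def
  have hSmeas : ∀ ab, Measurable (S ab) := fun ab =>
    Finset.measurable_sum _ (fun p _ => hmeas p)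
  have hSb : ∀ ab, ∀ᵐ ω ∂μ, |S ab ω| ≤ (Nc ab : ℝ) := by
    intro ab
    filter_upwards [ae_all_iff.2 hbdd] with ω h'
    calc |S ab ω| ≤ ∑ p ∈ Bl ab, |ξ ω p| := Finset.abs_sum_le_sum_abs _ _
      _ ≤ ∑ _p ∈ Bl ab, (1:ℝ) := Finset.sum_le_sum (fun p _ => h' p)
      _ = (Nc ab : ℝ) := by simp [hN_def]
  have hSN : ∀ ab, ∀ᵐ ω ∂μ, S ab ω ^ 2 / (Nc ab : ℝ) ≤ (Nc ab : ℝ) := by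
    intro ab
    filter_upwards [hSb ab] with ω h
    rcases Nat.eq_zero_or_pos (Nc ab) with h0 | h0
    · simp [h0]
    · have hNR : (0:ℝ) < Nc ab := by exact_mod_cast h0
      rw [div_le_iff₀ hNR]
      nlinarith [sq_abs (S ab ω), abs_nonneg (S ab ω),
        mul_self_le_mul_self (abs_nonneg (S ab ω)) h]
  have hmgf : ∀ ab, ∀ t : ℝ, mgf (S ab) μ t ≤ exp (t ^ 2 * (Nc ab) / 2) := by
    intro ab t
    have hsum : S ab = ∑ p ∈ Bl ab, (fun p ω => ξ ω p) p := by
      funext ω; simp [hS_def, Finset.sum_apply]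
    rw [hsum, hindep.mgf_sum (fun p => hmeas p)]
    calc ∏ p ∈ Bl ab, mgf (fun ω => ξ ω p) μ t
        ≤ ∏ _p ∈ Bl ab, exp (t ^ 2 / 2) :=
          Finset.prod_le_prod (fun p _ => mgf_nonneg)
            (fun p _ => my_mgf_single μ (hmeas p) (hmean p) (hbdd p) t)
      _ = exp (t ^ 2 / 2) ^ (Nc ab) := by rw [Finset.prod_const]
      _ = exp (t ^ 2 * Nc ab / 2) := by
          rw [← Real.exp_nat_mul]; congr 1; ring
  have hblock : ∀ ab, ∫ ω, exp (c * (S ab ω ^ 2 / (Nc ab : ℝ))) ∂μ ≤ exp 1 := fun ab =>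
    my_block_bound μ (hSmeas ab) (hSb ab) (hmgf ab)
  have hfacmeas : ∀ ab, Measurable (fun ω => exp (c * (S ab ω ^ 2 / (Nc ab : ℝ)))) := fun ab =>
    ((((hSmeas ab).pow_const 2).div_const _).const_mul c).exp
  have hFmeas : Measurable (fun ω => ∏ ab : Fin k₁ × Fin k₂, exp (c * (S ab ω ^ 2 / (Nc ab : ℝ)))) :=
    Finset.measurable_prod _ (fun ab _ => hfacmeas ab)
  have hFint : Integrable (fun ω => ∏ ab : Fin k₁ × Fin k₂, exp (c * (S ab ω ^ 2 / (Nc ab : ℝ)))) μ := by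
    refine Integrable.mono' (integrable_const (∏ ab : Fin k₁ × Fin k₂, exp (c * (Nc ab : ℝ))))
      hFmeas.aestronglyMeasurable ?_
    filter_upwards [ae_all_iff.2 hSN] with ω h
    rw [Real.norm_eq_abs, Finset.abs_prod]
    refine Finset.prod_le_prod (fun ab _ => abs_nonneg _) (fun ab _ => ?_)
    rw [abs_exp, Real.exp_le_exp]
    exact mul_le_mul_of_nonneg_left (h ab) hc0.le
  have hrw : ∀ ω, exp (c * ‖proj (blockSubspace z₁ z₂) (ξ ω)‖ ^ 2)
      = ∏ ab : Fin k₁ × Fin k₂, exp (c * (S ab ω ^ 2 / (Nc ab : ℝ))) := by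
    intro ω
    rw [my_proj_norm z₁ z₂ (ξ ω), Finset.mul_sum, Real.exp_sum]
  have hprod : ∫ ω, ∏ ab : Fin k₁ × Fin k₂, exp (c * (S ab ω ^ 2 / (Nc ab : ℝ))) ∂μ
      = ∏ ab : Fin k₁ × Fin k₂, ∫ ω, exp (c * (S ab ω ^ 2 / (Nc ab : ℝ))) ∂μ := by
    have hd : ∀ ab ab', ab ≠ ab' → Disjoint (Bl ab) (Bl ab') := by
      intro ab ab' hne
      rw [Finset.disjoint_left]
      intro p hp hp'
      simp only [hBl_def, Finset.mem_filter] at hp hp'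
      exact hne (hp.2 ▸ hp'.2)
    have := my_indep_prod hindep (fun p => hmeas p) Bl hd
      (fun ab x => exp (c * (x ^ 2 / (Nc ab : ℝ)))) (fun ab => by fun_prop)
      (fun ab => ⟨exp (c * (Nc ab : ℝ)), by
        filter_upwards [hSN ab] with ω h
        rw [abs_exp, Real.exp_le_exp]
        exact mul_le_mul_of_nonneg_left h hc0.le⟩) Finset.univ
    exact this
  calc ∫⁻ ω, ENNReal.ofReal (exp (c * ‖proj (blockSubspace z₁ z₂) (ξ ω)‖ ^ 2)) ∂μ
      = ∫⁻ ω, ENNReal.ofReal (∏ ab : Fin k₁ × Fin k₂, exp (c * (S ab ω ^ 2 / (Nc ab : ℝ)))) ∂μ :=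
        lintegral_congr (fun ω => by rw [hrw ω])
    _ = ENNReal.ofReal (∫ ω, ∏ ab : Fin k₁ × Fin k₂, exp (c * (S ab ω ^ 2 / (Nc ab : ℝ))) ∂μ) :=
        (ofReal_integral_eq_lintegral_ofReal hFint (Filter.Eventually.of_forall fun ω =>
          Finset.prod_nonneg (fun ab _ => (exp_pos _).le))).symm
    _ ≤ ENNReal.ofReal (exp (k₁ * k₂)) := by
        apply ENNReal.ofReal_le_ofReal
        rw [hprod]
        calc ∏ ab : Fin k₁ × Fin k₂, ∫ ω, exp (c * (S ab ω ^ 2 / (Nc ab : ℝ))) ∂μ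
            ≤ ∏ _ab : Fin k₁ × Fin k₂, exp 1 :=
              Finset.prod_le_prod (fun ab _ => integral_nonneg (fun ω => (exp_pos _).le))
                (fun ab _ => hblock ab)
          _ = exp 1 ^ (k₁ * k₂) := by
              rw [Finset.prod_const, Finset.card_univ, Fintype.card_prod, Fintype.card_fin,
                Fintype.card_fin]
          _ = exp ((k₁ : ℝ) * k₂) := by
              rw [← Real.exp_nat_mul, mul_one]; congr 1; push_cast; ring
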